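/- Let R₁, R₂ and C be independent uniform Boolean random variables and let N^A₁, N^A₂, N^B₁, N^B₂ be mutually independent Boolean random variables each equal to 1 with probability α, 0 < α < 1, independent of (R₁, R₂, C). Set Xᵢ = Rᵢ XOR N^Aᵢ, Yᵢ = Rᵢ XOR N^Bᵢ, Zᵢ = Rᵢ for i = 1, 2. Bob accepts when (X₁ XOR C XOR Y₁) = (X₂ XOR C XOR Y₂), and his decoded bit then errs exactly when X₁ XOR C XOR Y₁ ≠ C; Eve errs (or ties) when her two decoded values X₁ XOR C XOR Z₁ and X₂ XOR C XOR Z₂ are not both equal to C. Then P(Eve errs or ties | Bob accepts) > P(Bob errs | Bob accepts). -/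

import Mathlib

open MeasureTheory ProbabilityTheory

theorem n2_protocol_advantage {Ω : Type*} [MeasurableSpace Ω] (μ : Measure Ω)
    [IsProbabilityMeasure μ]
    (R₁ R₂ C NA₁ NA₂ NB₁ NB₂ : Ω → Bool)
    (hmeas : ∀ i, Measurable (![R₁, R₂, C, NA₁, NA₂, NB₁, NB₂] i))
    (hind : iIndepFun ![R₁, R₂, C, NA₁, NA₂, NB₁, NB₂] μ)
    (α : ℝ) (hα0 : 0 < α) (hα1 : α < 1)
    (hR₁ : (μ {ω | R₁ ω = true}).toReal = 1 / 2)
    (hR₂ : (μ {ω | R₂ ω = true}).toReal = 1 / 2)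
    (hC : (μ {ω | C ω = true}).toReal = 1 / 2)
    (hNA₁ : (μ {ω | NA₁ ω = true}).toReal = α)
    (hNA₂ : (μ {ω | NA₂ ω = true}).toReal = α)
    (hNB₁ : (μ {ω | NB₁ ω = true}).toReal = α)
    (hNB₂ : (μ {ω | NB₂ ω = true}).toReal = α) :
    -- conditioned on Bob accepting, Eve errs/ties with larger probability than Bob errs
    ((μ[|{ω | xor (xor (xor (R₁ ω) (NA₁ ω)) (C ω)) (xor (R₁ ω) (NB₁ ω)) =
              xor (xor (xor (R₂ ω) (NA₂ ω)) (C ω)) (xor (R₂ ω) (NB₂ ω))}])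
        {ω | ¬(xor (xor (xor (R₁ ω) (NA₁ ω)) (C ω)) (R₁ ω) = C ω ∧
               xor (xor (xor (R₂ ω) (NA₂ ω)) (C ω)) (R₂ ω) = C ω)}) >
    ((μ[|{ω | xor (xor (xor (R₁ ω) (NA₁ ω)) (C ω)) (xor (R₁ ω) (NB₁ ω)) =
              xor (xor (xor (R₂ ω) (NA₂ ω)) (C ω)) (xor (R₂ ω) (NB₂ ω))}])
        {ω | xor (xor (xor (R₁ ω) (NA₁ ω)) (C ω)) (xor (R₁ ω) (NB₁ ω)) ≠ C ω}) := by
  classical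
  have hmA1 : Measurable NA₁ := hmeas 3
  have hmA2 : Measurable NA₂ := hmeas 4
  have hmB1 : Measurable NB₁ := hmeas 5
  have hmB2 : Measurable NB₂ := hmeas 6
  -- the joint map
  set V : Ω → Bool × Bool × Bool × Bool := fun ω => (NA₁ ω, NA₂ ω, NB₁ ω, NB₂ ω) with hVdef
  have hVm : Measurable V := (hmA1.prodMk (hmA2.prodMk (hmB1.prodMk hmB2)))
  -- atom measures from independence
  have atom : ∀ a b c d : Bool,
      μ (NA₁ ⁻¹' {a} ∩ (NA₂ ⁻¹' {b} ∩ (NB₁ ⁻¹' {c} ∩ NB₂ ⁻¹' {d})))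
        = μ (NA₁ ⁻¹' {a}) * (μ (NA₂ ⁻¹' {b}) * (μ (NB₁ ⁻¹' {c}) * μ (NB₂ ⁻¹' {d}))) := by
    intro a b c d
    have h := hind.measure_inter_preimage_eq_mul (S := ({3,4,5,6} : Finset (Fin 7)))
      (sets := ![Set.univ, Set.univ, Set.univ, {a}, {b}, {c}, {d}]) (fun i _ => trivial)
    rw [Finset.set_biInter_insert, Finset.set_biInter_insert, Finset.set_biInter_insert,
      Finset.set_biInter_singleton, Finset.prod_insert (by decide), Finset.prod_insert (by decide),
      Finset.prod_insert (by decide), Finset.prod_singleton] at h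
    exact h
  -- marginal probabilities (as reals)
  set q : Bool → ℝ := fun b => if b then α else 1 - α with hq
  have marg : ∀ (f : Ω → Bool), Measurable f → (μ {ω | f ω = true}).toReal = α →
      ∀ a : Bool, (μ (f ⁻¹' {a})).toReal = q a := by
    intro f hf hfα a
    have htrue : f ⁻¹' {true} = {ω | f ω = true} := rfl
    cases a with
    | true => rw [htrue, hfα]; simp [hq]
    | false =>
      have hcomp : f ⁻¹' {false} = (f ⁻¹' {true})ᶜ := by
        ext ω; simp
      rw [hcomp, prob_compl_eq_one_sub (hf (measurableSet_singleton _)),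
        ENNReal.toReal_sub_of_le prob_le_one (by simp)]
      simp [htrue, hfα, hq]
  have margA1 := marg NA₁ hmA1 hNA₁
  have margA2 := marg NA₂ hmA2 hNA₂
  have margB1 := marg NB₁ hmB1 hNB₁
  have margB2 := marg NB₂ hmB2 hNB₂
  set w : Bool × Bool × Bool × Bool → ℝ :=
    fun v => q v.1 * (q v.2.1 * (q v.2.2.1 * q v.2.2.2)) with hw
  have atomR : ∀ v : Bool × Bool × Bool × Bool, (μ (V ⁻¹' {v})).toReal = w v := by
    rintro ⟨a, b, c, d⟩
    have hset : V ⁻¹' {(a, b, c, d)}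
        = NA₁ ⁻¹' {a} ∩ (NA₂ ⁻¹' {b} ∩ (NB₁ ⁻¹' {c} ∩ NB₂ ⁻¹' {d})) := by
      ext ω; simp [hVdef, Prod.ext_iff, and_assoc]
    rw [hset, atom a b c d, ENNReal.toReal_mul, ENNReal.toReal_mul, ENNReal.toReal_mul,
      margA1 a, margA2 b, margB1 c, margB2 d]
  -- measure of any Boolean event of the four noise bits
  have keyR : ∀ P : Bool × Bool × Bool × Bool → Bool,
      (μ {ω | P (V ω) = true}).toReal
        = ∑ v ∈ Finset.univ.filter (fun v => P v = true), w v := by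
    intro P
    have hset : {ω | P (V ω) = true}
        = ⋃ v ∈ Finset.univ.filter (fun v => P v = true), V ⁻¹' {v} := by
      ext ω
      simp only [Set.mem_setOf_eq, Set.mem_iUnion, Finset.mem_filter, Finset.mem_univ, true_and,
        Set.mem_preimage, Set.mem_singleton_iff]
      exact ⟨fun h => ⟨V ω, h, rfl⟩, fun ⟨v, hv, he⟩ => he ▸ hv⟩
    rw [hset, measure_biUnion_finset]
    · rw [ENNReal.toReal_sum (fun v _ => measure_ne_top μ _)]
      exact Finset.sum_congr rfl fun v _ => atomR v
    · intro u hu v hv huv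
      simp only [Function.onFun]
      apply Set.disjoint_left.mpr
      intro ω h1 h2
      exact huv ((Set.mem_preimage.mp h1).symm.trans (Set.mem_preimage.mp h2))
    · exact fun v _ => hVm (measurableSet_singleton v)
  have hmeasP : ∀ P : Bool × Bool × Bool × Bool → Bool,
      MeasurableSet {ω | P (V ω) = true} := by
    intro P
    exact hVm ((Set.toFinite {v | P v = true}).measurableSet)
  -- rewrite the three events
  set accP : Bool × Bool × Bool × Bool → Bool :=
    fun v => xor v.1 v.2.2.1 == xor v.2.1 v.2.2.2 with haccP
  have hA : {ω | xor (xor (xor (R₁ ω) (NA₁ ω)) (C ω)) (xor (R₁ ω) (NB₁ ω)) =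
              xor (xor (xor (R₂ ω) (NA₂ ω)) (C ω)) (xor (R₂ ω) (NB₂ ω))}
      = {ω | accP (V ω) = true} := by
    ext ω
    simp only [Set.mem_setOf_eq, hVdef, haccP]
    cases h1 : R₁ ω <;> cases h2 : R₂ ω <;> cases h3 : C ω <;> cases h4 : NA₁ ω <;>
      cases h5 : NA₂ ω <;> cases h6 : NB₁ ω <;> cases h7 : NB₂ ω <;> decide
  have hAE : {ω | accP (V ω) = true} ∩
      {ω | ¬(xor (xor (xor (R₁ ω) (NA₁ ω)) (C ω)) (R₁ ω) = C ω ∧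
             xor (xor (xor (R₂ ω) (NA₂ ω)) (C ω)) (R₂ ω) = C ω)}
      = {ω | (fun v : Bool × Bool × Bool × Bool => accP v && (v.1 || v.2.1)) (V ω) = true} := by
    ext ω
    simp only [Set.mem_inter_iff, Set.mem_setOf_eq, hVdef, haccP]
    cases h1 : R₁ ω <;> cases h2 : R₂ ω <;> cases h3 : C ω <;> cases h4 : NA₁ ω <;>
      cases h5 : NA₂ ω <;> cases h6 : NB₁ ω <;> cases h7 : NB₂ ω <;> decide
  have hAB : {ω | accP (V ω) = true} ∩
      {ω | xor (xor (xor (R₁ ω) (NA₁ ω)) (C ω)) (xor (R₁ ω) (NB₁ ω)) ≠ C ω}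
      = {ω | (fun v : Bool × Bool × Bool × Bool => accP v && xor v.1 v.2.2.1) (V ω) = true} := by
    ext ω
    simp only [Set.mem_inter_iff, Set.mem_setOf_eq, hVdef, haccP, ne_eq]
    cases h1 : R₁ ω <;> cases h2 : R₂ ω <;> cases h3 : C ω <;> cases h4 : NA₁ ω <;>
      cases h5 : NA₂ ω <;> cases h6 : NB₁ ω <;> cases h7 : NB₂ ω <;> decide
  -- numeric values
  have hPA : (μ {ω | accP (V ω) = true}).toReal
      = ((1 - α) ^ 2 + α ^ 2) ^ 2 + (2 * α * (1 - α)) ^ 2 := by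
    rw [keyR accP]
    rw [Finset.sum_filter]
    simp only [Fintype.sum_prod_type, Fintype.sum_bool, haccP, hw, hq]
    norm_num
    ring
  have hPE : (μ {ω | (fun v : Bool × Bool × Bool × Bool => accP v && (v.1 || v.2.1)) (V ω) = true}).toReal
      = ((1 - α) ^ 2 + α ^ 2) ^ 2 + (2 * α * (1 - α)) ^ 2
          - (1 - α) ^ 2 * ((1 - α) ^ 2 + α ^ 2) := by
    rw [keyR (fun v => accP v && (v.1 || v.2.1))]
    rw [Finset.sum_filter]
    simp only [Fintype.sum_prod_type, Fintype.sum_bool, haccP, hw, hq]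
    norm_num
    ring
  have hPB : (μ {ω | (fun v : Bool × Bool × Bool × Bool => accP v && xor v.1 v.2.2.1) (V ω) = true}).toReal
      = (2 * α * (1 - α)) ^ 2 := by
    rw [keyR (fun v => accP v && xor v.1 v.2.2.1)]
    rw [Finset.sum_filter]
    simp only [Fintype.sum_prod_type, Fintype.sum_bool, haccP, hw, hq]
    norm_num
    ring
  -- positivity of acceptance probability
  have h1α : 0 < 1 - α := by linarith
  have hPApos : 0 < (μ {ω | accP (V ω) = true}).toReal := by
    rw [hPA]; nlinarith [sq_nonneg ((1 - α) ^ 2 + α ^ 2), sq_nonneg α, sq_nonneg (1 - α),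
      mul_pos hα0 h1α]
  have hA0 : μ {ω | accP (V ω) = true} ≠ 0 := by
    intro h
    rw [h] at hPApos
    simp at hPApos
  -- conclude
  rw [hA, cond_apply (hmeasP accP) μ, cond_apply (hmeasP accP) μ, hAE, hAB]
  have hxt : (μ {ω | accP (V ω) = true})⁻¹ *
      μ {ω | (fun v : Bool × Bool × Bool × Bool => accP v && xor v.1 v.2.2.1) (V ω) = true} ≠ ⊤ :=
    ENNReal.mul_ne_top (ENNReal.inv_ne_top.mpr hA0) (measure_ne_top μ _)
  have hyt : (μ {ω | accP (V ω) = true})⁻¹ *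
      μ {ω | (fun v : Bool × Bool × Bool × Bool => accP v && (v.1 || v.2.1)) (V ω) = true} ≠ ⊤ :=
    ENNReal.mul_ne_top (ENNReal.inv_ne_top.mpr hA0) (measure_ne_top μ _)
  rw [gt_iff_lt, ← ENNReal.toReal_lt_toReal hxt hyt, ENNReal.toReal_mul, ENNReal.toReal_mul,
    ENNReal.toReal_inv, hPB, hPE]
  apply mul_lt_mul_of_pos_left _ (inv_pos.mpr hPApos)
  nlinarith [sq_nonneg α, sq_nonneg (1 - α), mul_pos hα0 hα0, mul_pos h1α h1α,
    mul_pos (mul_pos hα0 hα0) (mul_pos h1α h1α)]
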